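/- Let d ≥ 3, and let γ, w_m, λ_V be reals with 1 - 2γ(d-1)(1+w_m)/(d-2) ≠ 0 and λ_V ≠ 0. Suppose 0 < A < 2 and A satisfies the quadratic relation (3 - w_m) A² - 2A[(1+w_m) + λ_V²(d-2)/(d-1) · (1 - 2γ(d-1)(1+w_m)/(d-2))] + 2λ_V²(d-2)(1+w_m)/(d-1) · (1 - 2γd/(d-2)) = 0. Then the point (x_φ, x_V) = ((1/λ_V)√((d-1)/(d-2)) A, (1/λ_V)√((d-1)(2-A)A/(2(d-2)))) is a fixed point of the autonomous system. -/

import Mathlib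

set_option maxHeartbeats 1000000 in
theorem stmt_2 (d : ℕ) (hd : 3 ≤ d) (γ wm lV : ℝ) (hlV : lV ≠ 0)
    (B : ℝ) (hB : B = 1 - 2*γ*((d:ℝ)-1)*(1+wm)/((d:ℝ)-2)) (hB0 : B ≠ 0)
    (A : ℝ) (hA0 : 0 < A) (hA2 : A < 2)
    (hquad : (3 - wm)*A^2
      - 2*A*((1+wm) + lV^2*((d:ℝ)-2)/((d:ℝ)-1) * B)
      + 2*lV^2*((d:ℝ)-2)*(1+wm)/((d:ℝ)-1) * (1 - 2*γ*(d:ℝ)/((d:ℝ)-2)) = 0)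
    (xφ xV : ℝ)
    (hxφ : xφ = (1/lV) * Real.sqrt (((d:ℝ)-1)/((d:ℝ)-2)) * A)
    (hxV : xV = (1/lV) * Real.sqrt (((d:ℝ)-1)*(2-A)*A/(2*((d:ℝ)-2)))) :
    ((1 - 2*γ*(d:ℝ)/((d:ℝ)-2))*(1+wm)/B - 2)*xφ
      + 2*lV*Real.sqrt (((d:ℝ)-2)/((d:ℝ)-1))*xV^2
      + ((1-wm)/B)*xφ^3 - ((1+wm)/B)*xφ*xV^2 = 0
    ∧ ((1 - 2*γ*(d:ℝ)/((d:ℝ)-2))*(1+wm)/B)*xV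
      - lV*Real.sqrt (((d:ℝ)-2)/((d:ℝ)-1))*xφ*xV
      + ((1-wm)/B)*xV*xφ^2 - ((1+wm)/B)*xV^3 = 0 := by
  have hd3 : (3:ℝ) ≤ (d:ℝ) := by exact_mod_cast hd
  have hD1 : (0:ℝ) < (d:ℝ)-1 := by linarith
  have hD2 : (0:ℝ) < (d:ℝ)-2 := by linarith
  have hD1' : ((d:ℝ)-1) ≠ 0 := ne_of_gt hD1
  have hD2' : ((d:ℝ)-2) ≠ 0 := ne_of_gt hD2
  set r := Real.sqrt (((d:ℝ)-1)/((d:ℝ)-2)) with hr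
  set t := Real.sqrt (((d:ℝ)-2)/((d:ℝ)-1)) with htdef
  set v := Real.sqrt (((d:ℝ)-1)*(2-A)*A/(2*((d:ℝ)-2))) with hvdef
  have hr2 : r^2 = ((d:ℝ)-1)/((d:ℝ)-2) := Real.sq_sqrt (by positivity)
  have ht2 : t^2 = ((d:ℝ)-2)/((d:ℝ)-1) := Real.sq_sqrt (by positivity)
  have hv2 : v^2 = ((d:ℝ)-1)*(2-A)*A/(2*((d:ℝ)-2)) := Real.sq_sqrt (by
    exact div_nonneg (le_of_lt (mul_pos (mul_pos hD1 (by linarith)) hA0)) (by positivity))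
  have hrt : r * t = 1 := by
    rw [hr, htdef, ← Real.sqrt_mul (by positivity)]
    rw [show (((d:ℝ)-1)/((d:ℝ)-2)) * (((d:ℝ)-2)/((d:ℝ)-1)) = 1 by field_simp]
    exact Real.sqrt_one
  have hr2c : r^2*((d:ℝ)-2) = ((d:ℝ)-1) := by
    rw [hr2]; field_simp
  have hv2c : v^2*(2*((d:ℝ)-2)) = ((d:ℝ)-1)*(2-A)*A := by
    rw [hv2]; field_simp
  have htc : t*((d:ℝ)-1) = r*((d:ℝ)-2) := by
    have h1 : t = (r*t)*t := by rw [hrt]; ring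
    have : t = r * (((d:ℝ)-2)/((d:ℝ)-1)) := by rw [h1, mul_assoc, ← sq, ht2]
    rw [this]; field_simp
  have hq2 : (3-wm)*A^2*((d:ℝ)-1)*((d:ℝ)-2)
      - 2*A*((1+wm)*((d:ℝ)-1)*((d:ℝ)-2) + lV^2*((d:ℝ)-2)^2*B)
      + 2*lV^2*((d:ℝ)-2)*(1+wm)*(((d:ℝ)-2) - 2*γ*(d:ℝ)) = 0 := by
    have h0 := hquad
    field_simp at h0
    have h2 : ((d:ℝ)-1) * ((3-wm)*A^2*((d:ℝ)-1)*((d:ℝ)-2)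
      - 2*A*((1+wm)*((d:ℝ)-1)*((d:ℝ)-2) + lV^2*((d:ℝ)-2)^2*B)
      + 2*lV^2*((d:ℝ)-2)*(1+wm)*(((d:ℝ)-2) - 2*γ*(d:ℝ))) = 0 := by linear_combination ((d:ℝ)-1)*((d:ℝ)-2)*h0
    rcases mul_eq_zero.mp h2 with h | h
    · exact absurd h hD1'
    · exact h
  constructor
  · have key : 2*(((d:ℝ)-2))*( r*A*lV^2*((((d:ℝ)-2))-2*γ*(d:ℝ))*(1+wm)
        - 2*(((d:ℝ)-2))*B*r*A*lV^2 + 2*(((d:ℝ)-2))*B*lV^2*t*v^2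
        + (((d:ℝ)-2))*(1-wm)*r^3*A^3 - (((d:ℝ)-2))*(1+wm)*r*A*v^2 ) = 0 := by
      linear_combination (A*r)*hq2 + (2*((d:ℝ)-2)*B*lV^2*t)*hv2c
        + (2*((d:ℝ)-2)*B*lV^2*(2-A)*A)*htc + (2*((d:ℝ)-2)*(1-wm)*A^3*r)*hr2c
        - (((d:ℝ)-2)*(1+wm)*A*r)*hv2c
    have h2 : ((1 - 2*γ*(d:ℝ)/((d:ℝ)-2))*(1+wm)/B - 2)*xφ
        + 2*lV*t*xV^2 + ((1-wm)/B)*xφ^3 - ((1+wm)/B)*xφ*xV^2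
        = (2*(((d:ℝ)-2))*( r*A*lV^2*((((d:ℝ)-2))-2*γ*(d:ℝ))*(1+wm)
        - 2*(((d:ℝ)-2))*B*r*A*lV^2 + 2*(((d:ℝ)-2))*B*lV^2*t*v^2
        + (((d:ℝ)-2))*(1-wm)*r^3*A^3 - (((d:ℝ)-2))*(1+wm)*r*A*v^2 ))
          / (2*(((d:ℝ)-2))^2*B*lV^3) := by
      rw [hxφ, hxV]
      field_simp
    rw [h2, key, zero_div]
  · have key : 2*(((d:ℝ)-2))*( ((((d:ℝ)-2))-2*γ*(d:ℝ))*(1+wm)*v*lV^2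
        - (((d:ℝ)-2))*B*lV^2*t*r*A*v + (((d:ℝ)-2))*(1-wm)*v*r^2*A^2
        - (((d:ℝ)-2))*(1+wm)*v^3 ) = 0 := by
      linear_combination v*hq2 - (2*((d:ℝ)-2)^2*B*lV^2*A*v)*hrt
        + (2*((d:ℝ)-2)*(1-wm)*v*A^2)*hr2c - (((d:ℝ)-2)*(1+wm)*v)*hv2c
    have h2 : ((1 - 2*γ*(d:ℝ)/((d:ℝ)-2))*(1+wm)/B)*xV
        - lV*t*xφ*xV + ((1-wm)/B)*xV*xφ^2 - ((1+wm)/B)*xV^3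
        = (2*(((d:ℝ)-2))*( ((((d:ℝ)-2))-2*γ*(d:ℝ))*(1+wm)*v*lV^2
        - (((d:ℝ)-2))*B*lV^2*t*r*A*v + (((d:ℝ)-2))*(1-wm)*v*r^2*A^2
        - (((d:ℝ)-2))*(1+wm)*v^3 ))
          / (2*(((d:ℝ)-2))^2*B*lV^3) := by
      rw [hxφ, hxV]
      field_simp
    rw [h2, key, zero_div]
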